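/- For vectors u, v ∈ ℝ² with ‖u‖ < 1 and ‖v‖ ≤ 1, the Einstein–Poincaré relativistic sum u ⊕ v := (1/(1 + u·v))·{ u + (1/γ)·v + (γ/(1+γ))·(u·v)·u }, with γ = 1/√(1 − ‖u‖²), satisfies ‖u ⊕ v‖ ≤ 1; moreover ‖u ⊕ v‖ < 1 whenever ‖v‖ < 1, and ‖u ⊕ v‖ = 1 whenever ‖v‖ = 1. Hence the relativistic sum maps the closed unit disk to itself. -/
import Mathlib


open RealInnerProductSpace

/-- The Einstein–Poincaré relativistic sum `u ⊕ v` of two vectors of the plane, for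
`‖u‖ < 1`. -/
noncomputable def relSum (u v : EuclideanSpace ℝ (Fin 2)) : EuclideanSpace ℝ (Fin 2) :=
  (1 / (1 + ⟪u, v⟫)) •
    (u + (1 / (1 / Real.sqrt (1 - ‖u‖ ^ 2))) • v +
      (((1 / Real.sqrt (1 - ‖u‖ ^ 2)) / (1 + 1 / Real.sqrt (1 - ‖u‖ ^ 2))) * ⟪u, v⟫) • u)

/-- The key identity: `1 - ‖u ⊕ v‖² = (1 - ‖u‖²)(1 - ‖v‖²)/(1 + ⟪u, v⟫)²`. -/
lemma relSum_key (u v : EuclideanSpace ℝ (Fin 2)) (hu : ‖u‖ < 1) (hv : ‖v‖ ≤ 1) :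
    ‖relSum u v‖ ^ 2 = 1 - (1 - ‖u‖ ^ 2) * (1 - ‖v‖ ^ 2) / (1 + ⟪u, v⟫) ^ 2 := by
  set a := ‖u‖ ^ 2 with ha
  set c := ‖v‖ ^ 2 with hc
  set b := ⟪u, v⟫ with hb
  have ha1 : a < 1 := by nlinarith [norm_nonneg u]
  have hβpos : 0 < Real.sqrt (1 - a) := Real.sqrt_pos.2 (by linarith)
  set β := Real.sqrt (1 - a) with hβ
  have hβne : β ≠ 0 := ne_of_gt hβpos
  have hβ1ne : (1:ℝ) + β ≠ 0 := by positivity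
  have hβsq : β ^ 2 = 1 - a := Real.sq_sqrt (by linarith)
  have hbabs : |b| ≤ ‖u‖ * ‖v‖ := abs_real_inner_le_norm u v
  have hbb : |b| < 1 := by
    have h1 : ‖u‖ * ‖v‖ < 1 := by nlinarith [norm_nonneg u, norm_nonneg v]
    linarith
  have hb1 : (0:ℝ) < 1 + b := by
    cases' abs_lt.1 hbb with h2 h3; linarith
  have hwrite : relSum u v = (1 / (1 + b)) • (((1 + b / (1 + β)) • u) + β • v) := by
    rw [relSum, ← hb, ← ha, ← hβ]
    have h1 : (1 : ℝ) / (1 / β) = β := by field_simp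
    have h2 : (1 / β) / (1 + 1 / β) = 1 / (1 + β) := by
      field_simp
      ring
    rw [h1, h2]
    congr 1
    match_scalars <;> field_simp <;> ring
  have hαpos : (0:ℝ) < 1 + b / (1 + β) := by
    have habs : |b / (1 + β)| < 1 := by
      rw [abs_div, abs_of_pos (by linarith : (0:ℝ) < 1 + β)]
      rw [div_lt_one (by linarith)]
      linarith
    cases' abs_lt.1 habs with h _
    linarith
  rw [hwrite, norm_smul, mul_pow, norm_add_sq_real, norm_smul, norm_smul,
    real_inner_smul_left, real_inner_smul_right, ← hb]
  simp only [Real.norm_eq_abs, abs_of_pos hαpos, abs_of_pos hβpos,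
    abs_of_pos (by positivity : (0:ℝ) < 1 / (1 + b))]
  have e1 : ((1 + b / (1 + β)) * ‖u‖) ^ 2 = (1 + b / (1 + β)) ^ 2 * a := by
    rw [mul_pow, ha]
  have e2 : (β * ‖v‖) ^ 2 = β ^ 2 * c := by rw [mul_pow, hc]
  rw [e1, e2]
  have key : (1 + b / (1 + β)) ^ 2 * a + 2 * ((1 + b / (1 + β)) * (β * b)) + β ^ 2 * c
      = (1 + b) ^ 2 - (1 - a) * (1 - c) := by
    have haβ : a = 1 - β ^ 2 := by linarith
    rw [haβ]
    field_simp
    ring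
  rw [key]
  field_simp

/-- For `‖u‖ < 1` and `‖v‖ ≤ 1`, the relativistic sum satisfies `‖u ⊕ v‖ ≤ 1`; moreover
`‖u ⊕ v‖ < 1` whenever `‖v‖ < 1` and `‖u ⊕ v‖ = 1` whenever `‖v‖ = 1`: the relativistic
sum maps the closed unit disk to itself. -/
theorem relSum_mem_closedUnitDisk (u v : EuclideanSpace ℝ (Fin 2))
    (hu : ‖u‖ < 1) (hv : ‖v‖ ≤ 1) :
    ‖relSum u v‖ ≤ 1 ∧ (‖v‖ < 1 → ‖relSum u v‖ < 1) ∧ (‖v‖ = 1 → ‖relSum u v‖ = 1) := by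
  have key := relSum_key u v hu hv
  have ha1 : ‖u‖ ^ 2 < 1 := by nlinarith [norm_nonneg u]
  have hbabs : |⟪u, v⟫| ≤ ‖u‖ * ‖v‖ := abs_real_inner_le_norm u v
  have hb1 : (0:ℝ) < 1 + ⟪u, v⟫ := by
    have h1 : ‖u‖ * ‖v‖ < 1 := by nlinarith [norm_nonneg u, norm_nonneg v]
    cases' abs_le.1 hbabs with h2 h3
    nlinarith
  have hbsq : (0:ℝ) < (1 + ⟪u, v⟫) ^ 2 := by positivity
  refine ⟨?_, ?_, ?_⟩
  · have h : ‖relSum u v‖ ^ 2 ≤ 1 := by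
      rw [key]
      have hc1 : ‖v‖ ^ 2 ≤ 1 := by nlinarith [norm_nonneg v]
      have : 0 ≤ (1 - ‖u‖ ^ 2) * (1 - ‖v‖ ^ 2) / (1 + ⟪u, v⟫) ^ 2 :=
        div_nonneg (mul_nonneg (by linarith) (by linarith)) hbsq.le
      linarith
    nlinarith [norm_nonneg (relSum u v)]
  · intro hv1
    have h : ‖relSum u v‖ ^ 2 < 1 := by
      rw [key]
      have hc1 : ‖v‖ ^ 2 < 1 := by nlinarith [norm_nonneg v]
      have : 0 < (1 - ‖u‖ ^ 2) * (1 - ‖v‖ ^ 2) / (1 + ⟪u, v⟫) ^ 2 :=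
        div_pos (mul_pos (by linarith) (by linarith)) hbsq
      linarith
    nlinarith [norm_nonneg (relSum u v)]
  · intro hv1
    have h2 : ‖relSum u v‖ ^ 2 = 1 := by rw [key, hv1]; ring
    nlinarith [norm_nonneg (relSum u v), sq_nonneg (‖relSum u v‖ - 1), sq_nonneg (‖relSum u v‖ + 1)]
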